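/- Let λ1, λ2, λ3 > 0 be real numbers. Then the 4×4 complex matrix I⊗I + λ1·(σ1⊗σ1) − λ2·(σ2⊗σ2) + λ3·(σ3⊗σ3) is positive semidefinite if and only if max(−λ1 + λ2 + λ3, λ1 − λ2 + λ3, λ1 + λ2 − λ3) ≤ 1. -/

import Mathlib

open Matrix Kronecker ComplexOrder

noncomputable def σ1 : Matrix (Fin 2) (Fin 2) ℂ := !![0, 1; 1, 0]
noncomputable def σ2 : Matrix (Fin 2) (Fin 2) ℂ := !![0, -Complex.I; Complex.I, 0]
noncomputable def σ3 : Matrix (Fin 2) (Fin 2) ℂ := !![1, 0; 0, -1]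

/-- for lam1, lam2, lam3 > 0, the matrix
`I⊗I + lam1·(σ1⊗σ1) − lam2·(σ2⊗σ2) + lam3·(σ3⊗σ3)` is PSD iff
max(−lam1+lam2+lam3, lam1−lam2+lam3, lam1+lam2−lam3) ≤ 1. -/
theorem stmt2 (lam1 lam2 lam3 : ℝ) (h1 : 0 < lam1) (h2 : 0 < lam2) (h3 : 0 < lam3) :
    (((1 : Matrix (Fin 2) (Fin 2) ℂ) ⊗ₖ (1 : Matrix (Fin 2) (Fin 2) ℂ))
      + (lam1 : ℂ) • (σ1 ⊗ₖ σ1)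
      - (lam2 : ℂ) • (σ2 ⊗ₖ σ2)
      + (lam3 : ℂ) • (σ3 ⊗ₖ σ3)).PosSemidef
    ↔ max (-lam1 + lam2 + lam3) (max (lam1 - lam2 + lam3) (lam1 + lam2 - lam3)) ≤ 1 := by
  set M := (((1 : Matrix (Fin 2) (Fin 2) ℂ) ⊗ₖ (1 : Matrix (Fin 2) (Fin 2) ℂ))
      + (lam1 : ℂ) • (σ1 ⊗ₖ σ1)
      - (lam2 : ℂ) • (σ2 ⊗ₖ σ2)
      + (lam3 : ℂ) • (σ3 ⊗ₖ σ3)) with hMdef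
  have key : ∀ x : Fin 2 × Fin 2 → ℂ, star x ⬝ᵥ M *ᵥ x
      = ((1+lam3+lam1+lam2)/2 : ℂ) * ((starRingEnd ℂ) (x (0,0) + x (1,1)) * (x (0,0) + x (1,1)))
      + ((1+lam3-lam1-lam2)/2 : ℂ) * ((starRingEnd ℂ) (x (0,0) - x (1,1)) * (x (0,0) - x (1,1)))
      + ((1-lam3+lam1-lam2)/2 : ℂ) * ((starRingEnd ℂ) (x (0,1) + x (1,0)) * (x (0,1) + x (1,0)))
      + ((1-lam3-lam1+lam2)/2 : ℂ) * ((starRingEnd ℂ) (x (0,1) - x (1,0)) * (x (0,1) - x (1,0))) := by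
    intro x
    simp [hMdef, mulVec, dotProduct, Fintype.sum_prod_type, Fin.sum_univ_two, σ1, σ2, σ3,
      kroneckerMap_apply, Matrix.one_apply, map_add, map_sub]
    ring
  constructor
  · intro hM
    rw [Matrix.posSemidef_iff_dotProduct_mulVec] at hM
    have t2 := hM.2 (fun p => ![![(1:ℂ),0],![0,-1]] p.1 p.2)
    have t3 := hM.2 (fun p => ![![(0:ℂ),1],![1,0]] p.1 p.2)
    have t4 := hM.2 (fun p => ![![(0:ℂ),1],![-1,0]] p.1 p.2)
    rw [key] at t2 t3 t4
    norm_num at t2 t3 t4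
    have r2 : (0:ℝ) ≤ (1 + lam3 - lam1 - lam2)/2 := by
      simpa using (Complex.le_def.mp t2).1
    have r3 : (0:ℝ) ≤ (1 - lam3 + lam1 - lam2)/2 := by
      simpa using (Complex.le_def.mp t3).1
    have r4 : (0:ℝ) ≤ (1 - lam3 - lam1 + lam2)/2 := by
      simpa using (Complex.le_def.mp t4).1
    simp only [max_le_iff]
    refine ⟨by linarith, by linarith, by linarith⟩
  · intro hmax
    simp only [max_le_iff] at hmax
    obtain ⟨hA, hB, hC⟩ := hmax
    rw [Matrix.posSemidef_iff_dotProduct_mulVec]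
    constructor
    · ext i j
      obtain ⟨i1, i2⟩ := i
      obtain ⟨j1, j2⟩ := j
      fin_cases i1 <;> fin_cases i2 <;> fin_cases j1 <;> fin_cases j2 <;>
        simp [hMdef, σ1, σ2, σ3, Matrix.one_apply, conjTranspose_apply, Complex.conj_ofReal,
          Prod.ext_iff]
    · intro x
      rw [key x]
      refine add_nonneg (add_nonneg (add_nonneg ?_ ?_) ?_) ?_ <;>
        refine mul_nonneg ?_ (star_mul_self_nonneg _)
      · exact_mod_cast (show (0:ℝ) ≤ (1+lam3+lam1+lam2)/2 by linarith)
      · exact_mod_cast (show (0:ℝ) ≤ (1+lam3-lam1-lam2)/2 by linarith)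
      · exact_mod_cast (show (0:ℝ) ≤ (1-lam3+lam1-lam2)/2 by linarith)
      · exact_mod_cast (show (0:ℝ) ≤ (1-lam3-lam1+lam2)/2 by linarith)
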